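/- The polynomial x² - 4/3 is irreducible over ℚ, but its second iterate (x² - 4/3)² - 4/3 factors as (x² - 2x + 2/3)(x² + 2x + 2/3) over ℚ. -/

import Mathlib

open Polynomial

theorem stmt_1 :
    Irreducible (X ^ 2 - C (4 / 3 : ℚ)) ∧
    (X ^ 2 - C (4 / 3 : ℚ)).comp (X ^ 2 - C (4 / 3 : ℚ)) =
      (X ^ 2 - 2 * X + C (2 / 3 : ℚ)) * (X ^ 2 + 2 * X + C (2 / 3 : ℚ)) := by
  constructor
  · rw [X_pow_sub_C_irreducible_iff_of_prime Nat.prime_two]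
    intro b hb
    have hb' : (b : ℝ) ^ 2 = 4 / 3 := by rw [show ((4:ℝ)/3) = ((4/3:ℚ):ℝ) by norm_num, ← hb]; push_cast; ring
    have h : ((3 * b / 2 : ℚ) : ℝ) ^ 2 = 3 := by push_cast; nlinarith
    have h3 : Irrational (Real.sqrt 3) := by
      simpa using Nat.prime_three.irrational_sqrt
    exact h3 ⟨|3 * b / 2|, by rw [← h, Real.sqrt_sq_eq_abs, Rat.cast_abs]⟩
  · simp only [sub_comp, pow_comp, X_comp, C_comp]
    have h : (3 : ℚ[X]) * C (2/3 : ℚ) = 2 := by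
      have h' : C (3 : ℚ) * C (2/3 : ℚ) = C (2 : ℚ) := by rw [← C_mul]; norm_num
      simpa [map_ofNat] using h'
    have h4 : C (4/3 : ℚ) = 2 * C (2/3 : ℚ) := by
      have h' : C (4/3 : ℚ) = C (2 : ℚ) * C (2/3 : ℚ) := by rw [← C_mul]; norm_num
      simpa [map_ofNat] using h'
    rw [h4]
    linear_combination (C (2/3 : ℚ) - 2 * X ^ 2) * h
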